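/- For every x ∈ ℚ_2 one has ‖x‖ ≤ 1 if and only if there exists y ∈ ℚ_2 with y³ = 1 + 2·x³. (Hence the valuation ring ℤ_2 is defined in ℚ_2 by the ring formula ∃y (y³ = 1 + 2x³).) -/

import Mathlib

open Polynomial

theorem z2_defined_by_cubes (x : ℚ_[2]) :
    ‖x‖ ≤ 1 ↔ ∃ y : ℚ_[2], y ^ 3 = 1 + 2 * x ^ 3 := by
  constructor
  · intro h
    set x₀ : ℤ_[2] := ⟨x, h⟩ with hx₀
    set F : Polynomial ℤ_[2] := X ^ 3 - C (1 + 2 * x₀ ^ 3) with hF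
    have heval : F.eval 1 = -(2 * x₀ ^ 3) := by simp [hF]
    have hderiv : F.derivative.eval 1 = 3 := by simp [hF, derivative_pow]
    have h3 : ‖(3 : ℤ_[2])‖ = 1 := by
      refine le_antisymm (PadicInt.norm_le_one _) ?_
      by_contra hlt
      push_neg at hlt
      have : ((2:ℕ):ℤ) ∣ (3:ℤ) := by
        rw [← PadicInt.norm_int_lt_one_iff_dvd]
        simpa using hlt
      norm_num at this
    have hnorm : ‖F.eval 1‖ < ‖F.derivative.eval 1‖ ^ 2 := by
      rw [heval, hderiv, h3, one_pow, norm_neg]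
      calc ‖2 * x₀ ^ 3‖ ≤ ‖(2:ℤ_[2])‖ * 1 := by
            rw [norm_mul]
            exact mul_le_mul_of_nonneg_left
              (PadicInt.norm_le_one (x₀ ^ 3)) (norm_nonneg _)
        _ < 1 := by
            rw [mul_one]
            have : ‖((2:ℕ) : ℤ_[2])‖ = ((2:ℕ) : ℝ)⁻¹ := PadicInt.norm_p
            norm_num at this
            rw [this]; norm_num
    obtain ⟨z, hz, -⟩ := hensels_lemma hnorm
    have hz' : z ^ 3 = 1 + 2 * x₀ ^ 3 := by
      have := hz
      simp [hF, sub_eq_zero] at this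
      exact this
    refine ⟨(z : ℚ_[2]), ?_⟩
    have : ((z ^ 3 : ℤ_[2]) : ℚ_[2]) = ((1 + 2 * x₀ ^ 3 : ℤ_[2]) : ℚ_[2]) := by
      exact_mod_cast congrArg _ hz'
    push_cast at this
    simpa [show ((2 : ℤ_[2]) : ℚ_[2]) = 2 by exact_mod_cast PadicInt.coe_natCast (p := 2) 2] using this
  · rintro ⟨y, hy⟩
    by_contra hx
    rw [Padic.norm_le_one_iff_val_nonneg] at hx
    push_neg at hx
    have hx0 : x ≠ 0 := by rintro rfl; simp at hx
    have h2 : (2 : ℚ_[2]) ≠ 0 := by norm_num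
    have hx3 : x ^ 3 ≠ 0 := pow_ne_zero _ hx0
    have hvx3 : (x ^ 3).valuation = 3 * x.valuation := by
      have h1 : x ^ 3 = x * (x * x) := by ring
      rw [h1, Padic.valuation_mul hx0 (mul_ne_zero hx0 hx0),
        Padic.valuation_mul hx0 hx0]; ring
    have hv2x3 : (2 * x ^ 3).valuation = 1 + 3 * x.valuation := by
      rw [Padic.valuation_mul h2 hx3, hvx3]
      have : (2 : ℚ_[2]) = ((2:ℕ) : ℚ_[2]) := by norm_num
      rw [this, Padic.valuation_natCast]
      simp [padicValNat_self]
    -- norm of 2x^3 is bigger than 1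
    have hlt : ‖(1:ℚ_[2])‖ < ‖2 * x ^ 3‖ := by
      rw [norm_one, Padic.norm_eq_zpow_neg_valuation (mul_ne_zero h2 hx3), hv2x3]
      have : (0:ℤ) < -(1 + 3 * x.valuation) := by omega
      calc (1:ℝ) = (2:ℝ)^(0:ℤ) := by norm_num
        _ < (2:ℝ) ^ (-(1 + 3 * x.valuation)) := by
            apply zpow_lt_zpow_right₀ (by norm_num) this
        _ = ((2:ℕ):ℝ) ^ (-(1 + 3 * x.valuation)) := by norm_num
    have hsum : ‖1 + 2 * x ^ 3‖ = ‖2 * x ^ 3‖ := by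
      rw [Padic.add_eq_max_of_ne (ne_of_lt hlt), max_eq_right hlt.le]
    have hne : (1 + 2 * x ^ 3 : ℚ_[2]) ≠ 0 := by
      intro h0
      rw [h0, norm_zero] at hsum
      exact (mul_ne_zero h2 hx3) (norm_eq_zero.mp hsum.symm)
    have hy0 : y ≠ 0 := by rintro rfl; simp at hy; exact hne hy.symm
    have hvy : (y ^ 3).valuation = 3 * y.valuation := by
      have h1 : y ^ 3 = y * (y * y) := by ring
      rw [h1, Padic.valuation_mul hy0 (mul_ne_zero hy0 hy0),
        Padic.valuation_mul hy0 hy0]; ring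
    have hveq : 3 * y.valuation = 1 + 3 * x.valuation := by
      rw [← hvy, hy]
      -- valuation (1 + 2x^3) = 1 + 3 v(x), via norms
      have := Padic.norm_eq_zpow_neg_valuation hne
      rw [hsum, Padic.norm_eq_zpow_neg_valuation (mul_ne_zero h2 hx3), hv2x3] at this
      have hinj := zpow_right_injective₀ (show (0:ℝ) < ((2:ℕ):ℝ) by norm_num)
        (show ((2:ℕ):ℝ) ≠ 1 by norm_num) this
      omega
    omega
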